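/- arXiv:1808.04580 — 2 statements merged into one kernel-verified Lean document; each statement's English description precedes it below -/
import Mathlib

section
/- With W, E, η, ε as in the normalization-error setting and ε < η, the diagonal matrices D = diag(W·1) and D_E = diag((W+E)·1) satisfy ‖D^{-1/2} - D_E^{-1/2}‖_∞ ≤ ((η - ε)^{-1/2} - η^{-1/2}) ‖W‖_∞^{-1/2}. -/
open Matrix BigOperators Real

lemma aux_id (x y : ℝ) (hx : 0 < x) (hy : 0 < y) :
    (Real.sqrt x)⁻¹ - (Real.sqrt y)⁻¹ =
      (y - x) / (Real.sqrt x * Real.sqrt y * (Real.sqrt x + Real.sqrt y)) := by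
  have hx' := Real.sqrt_pos.mpr hx
  have hy' := Real.sqrt_pos.mpr hy
  have hxs : Real.sqrt x ^ 2 = x := Real.sq_sqrt hx.le
  have hys : Real.sqrt y ^ 2 = y := Real.sq_sqrt hy.le
  field_simp
  linear_combination hys - hxs

lemma key_bound (a b x y : ℝ) (hb : 0 < b) (hba : b ≤ a) (hax : a ≤ x) (hby : b ≤ y)
    (hxy : |y - x| ≤ a - b) :
    |(Real.sqrt x)⁻¹ - (Real.sqrt y)⁻¹| ≤ (Real.sqrt b)⁻¹ - (Real.sqrt a)⁻¹ := by
  have ha : 0 < a := hb.trans_le hba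
  have hx : 0 < x := ha.trans_le hax
  have hy : 0 < y := hb.trans_le hby
  have sax : Real.sqrt a ≤ Real.sqrt x := Real.sqrt_le_sqrt hax
  have sby : Real.sqrt b ≤ Real.sqrt y := Real.sqrt_le_sqrt hby
  have hb' := Real.sqrt_pos.mpr hb
  have ha' := Real.sqrt_pos.mpr ha
  have hx' := Real.sqrt_pos.mpr hx
  have hy' := Real.sqrt_pos.mpr hy
  rw [aux_id x y hx hy, aux_id b a hb ha, abs_div,
    abs_of_pos (by positivity : (0:ℝ) < Real.sqrt x * Real.sqrt y * (Real.sqrt x + Real.sqrt y))]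
  apply div_le_div₀ (by linarith) hxy (by positivity)
  calc Real.sqrt b * Real.sqrt a * (Real.sqrt b + Real.sqrt a)
      ≤ Real.sqrt y * Real.sqrt x * (Real.sqrt y + Real.sqrt x) :=
        mul_le_mul (mul_le_mul sby sax ha'.le hy'.le) (add_le_add sby sax)
          (by positivity) (by positivity)
    _ = Real.sqrt x * Real.sqrt y * (Real.sqrt x + Real.sqrt y) := by ring

theorem inv_sqrt_degree_perturbation_bound
    (n : ℕ) (hn : 0 < n) (W E : Matrix (Fin n) (Fin n) ℝ)
    (hnonneg : ∀ i j, 0 ≤ W i j) (hpos : ∀ i, ∃ j, 0 < W i j)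
    (d dE : Fin n → ℝ)
    (hd : d = W *ᵥ (fun _ => 1)) (hdE : dE = (W + E) *ᵥ (fun _ => 1))
    (normW normE dmin eta eps : ℝ)
    (hnormW : normW = ⨆ i, ∑ j, |W i j|)
    (hnormE : normE = ⨆ i, ∑ j, |E i j|)
    (hdmin : dmin = ⨅ i, d i)
    (heta : eta = dmin / normW)
    (heps : eps = normE / normW)
    (hlt : eps < eta)
    (Dinvsqrt DEinvsqrt : Matrix (Fin n) (Fin n) ℝ)
    (hDinv : Dinvsqrt = Matrix.diagonal (fun i => (Real.sqrt (d i))⁻¹))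
    (hDEinv : DEinvsqrt = Matrix.diagonal (fun i => (Real.sqrt (dE i))⁻¹)) :
    (⨆ i, ∑ j, |(Dinvsqrt - DEinvsqrt) i j|) ≤
      ((eta - eps) ^ (-(1 : ℝ) / 2) - eta ^ (-(1 : ℝ) / 2)) * normW ^ (-(1 : ℝ) / 2) := by
  haveI : Nonempty (Fin n) := ⟨⟨0, hn⟩⟩
  -- basic formulas for d and dE
  have hdi : ∀ i, d i = ∑ j, W i j := by
    intro i; simp [hd, Matrix.mulVec, dotProduct]
  have hdEi : ∀ i, dE i = d i + ∑ j, E i j := by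
    intro i
    simp [hdE, hd, Matrix.mulVec, dotProduct, Matrix.add_apply, Finset.sum_add_distrib]
  -- norms bound row sums
  have hWrow : ∀ i, ∑ j, |W i j| ≤ normW := by
    intro i; rw [hnormW]
    exact le_ciSup (f := fun i => ∑ j, |W i j|) (Set.Finite.bddAbove (Set.finite_range _)) i
  have hErow : ∀ i, ∑ j, |E i j| ≤ normE := by
    intro i; rw [hnormE]
    exact le_ciSup (f := fun i => ∑ j, |E i j|) (Set.Finite.bddAbove (Set.finite_range _)) i
  have hnormE0 : 0 ≤ normE :=
    le_trans (Finset.sum_nonneg fun j _ => abs_nonneg _) (hErow (Classical.arbitrary _))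
  have hnormW0 : 0 ≤ normW :=
    le_trans (Finset.sum_nonneg fun j _ => abs_nonneg _) (hWrow (Classical.arbitrary _))
  have hWpos : 0 < normW := by
    rcases hnormW0.lt_or_eq with h | h
    · exact h
    · exfalso
      rw [heps, heta, ← h, div_zero, div_zero] at hlt
      exact lt_irrefl _ hlt
  have hdminE : normE < dmin := by
    rw [heps, heta, div_lt_div_iff_of_pos_right hWpos] at hlt
    exact hlt
  have hbpos : 0 < dmin - normE := by linarith
  -- pointwise bounds on d and dE
  have hdge : ∀ i, dmin ≤ d i := by
    intro i; rw [hdmin]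
    exact ciInf_le (Set.Finite.bddBelow (Set.finite_range _)) i
  have hEabs : ∀ i, |∑ j, E i j| ≤ normE := fun i =>
    le_trans (Finset.abs_sum_le_sum_abs _ _) (hErow i)
  have hdEge : ∀ i, dmin - normE ≤ dE i := by
    intro i
    have := hEabs i
    have := abs_le.mp (hEabs i)
    have := hdge i
    rw [hdEi i]; linarith [this]
  have hdiff : ∀ i, |dE i - d i| ≤ dmin - (dmin - normE) := by
    intro i
    rw [hdEi i]
    simpa using hEabs i
  -- the RHS equals (√(dmin - normE))⁻¹ - (√dmin)⁻¹
  have rp : ∀ t : ℝ, 0 < t → t ^ (-(1:ℝ)/2) = (Real.sqrt t)⁻¹ := by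
    intro t ht
    rw [show (-(1:ℝ)/2) = -(1/2 : ℝ) by ring, Real.rpow_neg ht.le, ← Real.sqrt_eq_rpow]
  have hetaeps : eta - eps = (dmin - normE) / normW := by
    rw [heta, heps]; ring
  have hsW := Real.sqrt_pos.mpr hWpos
  have hsb := Real.sqrt_pos.mpr hbpos
  have hsa := Real.sqrt_pos.mpr (hbpos.trans_le (by linarith : dmin - normE ≤ dmin))
  have hRHS : ((eta - eps) ^ (-(1 : ℝ) / 2) - eta ^ (-(1 : ℝ) / 2)) * normW ^ (-(1 : ℝ) / 2)
      = (Real.sqrt (dmin - normE))⁻¹ - (Real.sqrt dmin)⁻¹ := by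
    rw [hetaeps, heta, rp _ (div_pos hbpos hWpos),
      rp _ (div_pos (by linarith : (0:ℝ) < dmin) hWpos), rp _ hWpos,
      Real.sqrt_div hbpos.le, Real.sqrt_div (by linarith : (0:ℝ) ≤ dmin)]
    field_simp
  rw [hRHS]
  -- bound the supremum
  apply ciSup_le
  intro i
  have hrow : ∑ j, |(Dinvsqrt - DEinvsqrt) i j|
      = |(Real.sqrt (d i))⁻¹ - (Real.sqrt (dE i))⁻¹| := by
    rw [hDinv, hDEinv]
    rw [Finset.sum_eq_single i]
    · simp [Matrix.sub_apply, Matrix.diagonal_apply_eq]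
    · intro j _ hj
      simp [Matrix.sub_apply, Matrix.diagonal_apply_ne _ (Ne.symm hj)]
    · simp
  rw [hrow]
  exact key_bound dmin (dmin - normE) (d i) (dE i) hbpos (by linarith) (hdge i) (hdEge i)
    (hdiff i)
end

section
/- (Lemma on error propagation for normalized matrices.) Let W ∈ ℝ^{n×n} have nonnegative entries and at least one positive entry per row, E ∈ ℝ^{n×n} an error matrix, W_E = W + E, D = diag(W·1), D_E = diag(W_E·1), A = D^{-1/2} W D^{-1/2}, A_E = D_E^{-1/2} W_E D_E^{-1/2}. Let d_min be the minimum diagonal entry of D, η = d_min/‖W‖_∞, ε = ‖E‖_∞/‖W‖_∞. If ε < η then ‖A - A_E‖_∞ ≤ ε(1+η)/(η(η-ε)). -/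
open Matrix BigOperators

private lemma invsqrt_diff (a b x y N : ℝ) (ha : 0 < a) (hb : 0 < b)
    (hax : a ≤ x) (hby : b ≤ y) (hN : |y - x| ≤ N) :
    |(Real.sqrt x)⁻¹ - (Real.sqrt y)⁻¹| ≤
      N / (Real.sqrt a * Real.sqrt b * (Real.sqrt a + Real.sqrt b)) := by
  have hx : 0 < x := ha.trans_le hax
  have hy : 0 < y := hb.trans_le hby
  have hsx : 0 < Real.sqrt x := Real.sqrt_pos.2 hx
  have hsy : 0 < Real.sqrt y := Real.sqrt_pos.2 hy
  have hsa : 0 < Real.sqrt a := Real.sqrt_pos.2 ha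
  have hsb : 0 < Real.sqrt b := Real.sqrt_pos.2 hb
  have h1 : Real.sqrt x * Real.sqrt x = x := Real.mul_self_sqrt hx.le
  have h2 : Real.sqrt y * Real.sqrt y = y := Real.mul_self_sqrt hy.le
  have key : (Real.sqrt x)⁻¹ - (Real.sqrt y)⁻¹ =
      (y - x) / (Real.sqrt x * Real.sqrt y * (Real.sqrt x + Real.sqrt y)) := by
    have h3 : (Real.sqrt y - Real.sqrt x) * (Real.sqrt y + Real.sqrt x) = y - x := by
      linear_combination h2 - h1
    rw [eq_div_iff (by positivity), ← h3]
    field_simp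
    ring
  rw [key, abs_div, abs_of_pos (by positivity : (0:ℝ) < Real.sqrt x * Real.sqrt y * (Real.sqrt x + Real.sqrt y))]
  apply div_le_div₀ ((abs_nonneg _).trans hN) hN (by positivity)
  have hax' := Real.sqrt_le_sqrt hax
  have hby' := Real.sqrt_le_sqrt hby
  have := mul_le_mul hax' hby' hsb.le hsx.le
  exact mul_le_mul this (add_le_add hax' hby') (by positivity) (by positivity)

theorem normalization_error_propagation
    (n : ℕ) (hn : 0 < n) (W E : Matrix (Fin n) (Fin n) ℝ)
    (hnonneg : ∀ i j, 0 ≤ W i j) (hpos : ∀ i, ∃ j, 0 < W i j)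
    (WE : Matrix (Fin n) (Fin n) ℝ) (hWE : WE = W + E)
    (d dE : Fin n → ℝ)
    (hd : d = W *ᵥ (fun _ => 1)) (hdE : dE = WE *ᵥ (fun _ => 1))
    (normW normE dmin eta eps : ℝ)
    (hnormW : normW = ⨆ i, ∑ j, |W i j|)
    (hnormE : normE = ⨆ i, ∑ j, |E i j|)
    (hdmin : dmin = ⨅ i, d i)
    (heta : eta = dmin / normW)
    (heps : eps = normE / normW)
    (hlt : eps < eta)
    (Dinvsqrt DEinvsqrt A AE : Matrix (Fin n) (Fin n) ℝ)
    (hDinv : Dinvsqrt = Matrix.diagonal (fun i => (Real.sqrt (d i))⁻¹))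
    (hDEinv : DEinvsqrt = Matrix.diagonal (fun i => (Real.sqrt (dE i))⁻¹))
    (hA : A = Dinvsqrt * W * Dinvsqrt)
    (hAE : AE = DEinvsqrt * WE * DEinvsqrt) :
    (⨆ i, ∑ j, |(A - AE) i j|) ≤ eps * (1 + eta) / (eta * (eta - eps)) := by
  have hne : Nonempty (Fin n) := ⟨⟨0, hn⟩⟩
  -- basic facts about d, dE
  have hdi : ∀ i, d i = ∑ j, W i j := by
    intro i; rw [hd]; simp [Matrix.mulVec, dotProduct]
  have hdEi : ∀ i, dE i = d i + ∑ j, E i j := by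
    intro i; rw [hdE, hWE, hdi i]
    simp [Matrix.mulVec, dotProduct, Matrix.add_apply, Finset.sum_add_distrib]
  have hdpos : ∀ i, 0 < d i := by
    intro i; rw [hdi]
    obtain ⟨j, hj⟩ := hpos i
    exact Finset.sum_pos' (fun k _ => hnonneg i k) ⟨j, Finset.mem_univ j, hj⟩
  have hbW : BddAbove (Set.range fun i => ∑ j, |W i j|) :=
    Set.Finite.bddAbove (Set.finite_range _)
  have hbE : BddAbove (Set.range fun i => ∑ j, |E i j|) :=
    Set.Finite.bddAbove (Set.finite_range _)
  have hbd : BddBelow (Set.range d) := Set.Finite.bddBelow (Set.finite_range _)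
  have hdle : ∀ i, d i ≤ normW := by
    intro i; rw [hnormW]
    calc d i = ∑ j, |W i j| := by
          rw [hdi]; exact Finset.sum_congr rfl fun j _ => (abs_of_nonneg (hnonneg i j)).symm
      _ ≤ _ := le_ciSup hbW i
  have hdminle : ∀ i, dmin ≤ d i := fun i => hdmin ▸ ciInf_le hbd i
  have hdminpos : 0 < dmin := by
    obtain ⟨i0, hi0⟩ := Finite.exists_min d
    exact lt_of_lt_of_le (hdpos i0) (hdmin ▸ le_ciInf hi0)
  have hnormWpos : 0 < normW :=
    lt_of_lt_of_le (hdpos (Classical.arbitrary _)) (hdle _)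
  have hEle : ∀ i, ∑ j, |E i j| ≤ normE := fun i => hnormE ▸ le_ciSup hbE i
  have hnormEnn : 0 ≤ normE :=
    le_trans (Finset.sum_nonneg fun j _ => abs_nonneg _) (hEle (Classical.arbitrary _))
  have hnE : normE < dmin := by
    rw [heps, heta] at hlt
    have := (div_lt_div_iff₀ hnormWpos hnormWpos).1 hlt
    exact lt_of_mul_lt_mul_right this hnormWpos.le
  have hbpos : 0 < dmin - normE := sub_pos.2 hnE
  have hEabs : ∀ i, |∑ j, E i j| ≤ normE :=
    fun i => (Finset.abs_sum_le_sum_abs _ _).trans (hEle i)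
  have hdEge : ∀ i, dmin - normE ≤ dE i := by
    intro i
    have h1 := (abs_le.1 (hEabs i)).1
    have h2 := hdminle i
    rw [hdEi]; linarith
  -- entry formulas
  have hAij : ∀ i j, A i j = (Real.sqrt (d i))⁻¹ * W i j * (Real.sqrt (d j))⁻¹ := by
    intro i j
    rw [hA, hDinv]
    simp [Matrix.mul_diagonal, Matrix.diagonal_mul]
  have hAEij : ∀ i j, AE i j = (Real.sqrt (dE i))⁻¹ * WE i j * (Real.sqrt (dE j))⁻¹ := by
    intro i j
    rw [hAE, hDEinv]
    simp [Matrix.mul_diagonal, Matrix.diagonal_mul]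
  -- notation
  set sa := Real.sqrt dmin with hsadef
  set sb := Real.sqrt (dmin - normE) with hsbdef
  have hsa : 0 < sa := Real.sqrt_pos.2 hdminpos
  have hsb : 0 < sb := Real.sqrt_pos.2 hbpos
  have hsa2 : sa * sa = dmin := Real.mul_self_sqrt hdminpos.le
  have hsb2 : sb * sb = dmin - normE := Real.mul_self_sqrt hbpos.le
  set P := sa⁻¹ with hPdef
  set Q := sb⁻¹ with hQdef
  set del := normE / (sa * sb * (sa + sb)) with hdeldef
  have hPnn : 0 ≤ P := by positivity
  have hQnn : 0 ≤ Q := by positivity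
  have hdelnn : 0 ≤ del := by positivity
  have hp : ∀ i, (Real.sqrt (d i))⁻¹ ≤ P := by
    intro i
    exact inv_anti₀ hsa (Real.sqrt_le_sqrt (hdminle i))
  have hq : ∀ i, (Real.sqrt (dE i))⁻¹ ≤ Q := by
    intro i
    exact inv_anti₀ hsb (Real.sqrt_le_sqrt (hdEge i))
  have hpnn : ∀ i, (0:ℝ) ≤ (Real.sqrt (d i))⁻¹ := fun i => by positivity
  have hqnn : ∀ i, (0:ℝ) ≤ (Real.sqrt (dE i))⁻¹ := fun i => by positivity
  have hdel : ∀ i, |(Real.sqrt (d i))⁻¹ - (Real.sqrt (dE i))⁻¹| ≤ del := by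
    intro i
    apply invsqrt_diff dmin (dmin - normE) (d i) (dE i) normE hdminpos hbpos
      (hdminle i) (hdEge i)
    rw [hdEi]
    simpa using hEabs i
  set C := P * P * normE + (del * P + Q * del) * (normW + normE) with hCdef
  -- row sum bound
  have hrow : ∀ i, ∑ j, |(A - AE) i j| ≤ C := by
    intro i
    have hWEsum : ∑ j, |WE i j| ≤ normW + normE := by
      calc ∑ j, |WE i j| ≤ ∑ j, (|W i j| + |E i j|) := by
            apply Finset.sum_le_sum
            intro j _
            rw [hWE]
            exact abs_add_le _ _
        _ = (∑ j, |W i j|) + ∑ j, |E i j| := Finset.sum_add_distrib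
        _ ≤ normW + normE := add_le_add (hnormW ▸ le_ciSup hbW i) (hEle i)
    have ptwise : ∀ j, |(A - AE) i j| ≤
        P * P * |E i j| + (del * P + Q * del) * |WE i j| := by
      intro j
      set pi := (Real.sqrt (d i))⁻¹
      set pj := (Real.sqrt (d j))⁻¹
      set qi := (Real.sqrt (dE i))⁻¹
      set qj := (Real.sqrt (dE j))⁻¹
      have hid : (A - AE) i j =
          -(pi * E i j * pj) + (pi - qi) * WE i j * pj + qi * WE i j * (pj - qj) := by
        rw [Matrix.sub_apply, hAij, hAEij, hWE]
        simp only [Matrix.add_apply]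
        ring
      have t1 : |pi * E i j * pj| ≤ P * P * |E i j| := by
        rw [abs_mul, abs_mul, abs_of_nonneg (hpnn i), abs_of_nonneg (hpnn j)]
        calc pi * |E i j| * pj = pi * pj * |E i j| := by ring
          _ ≤ P * P * |E i j| :=
            mul_le_mul_of_nonneg_right
              (mul_le_mul (hp i) (hp j) (hpnn j) hPnn) (abs_nonneg _)
      have t2 : |(pi - qi) * WE i j * pj| ≤ del * P * |WE i j| := by
        rw [abs_mul, abs_mul, abs_of_nonneg (hpnn j)]
        calc |pi - qi| * |WE i j| * pj = |pi - qi| * pj * |WE i j| := by ring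
          _ ≤ del * P * |WE i j| :=
            mul_le_mul_of_nonneg_right
              (mul_le_mul (hdel i) (hp j) (hpnn j) hdelnn) (abs_nonneg _)
      have t3 : |qi * WE i j * (pj - qj)| ≤ Q * del * |WE i j| := by
        rw [abs_mul, abs_mul, abs_of_nonneg (hqnn i)]
        calc qi * |WE i j| * |pj - qj| = qi * |pj - qj| * |WE i j| := by ring
          _ ≤ Q * del * |WE i j| :=
            mul_le_mul_of_nonneg_right
              (mul_le_mul (hq i) (hdel j) (abs_nonneg _) hQnn) (abs_nonneg _)
      calc |(A - AE) i j|
          ≤ |pi * E i j * pj| + |(pi - qi) * WE i j * pj| + |qi * WE i j * (pj - qj)| := by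
            rw [hid]
            refine (abs_add_le _ _).trans (add_le_add_left ?_ _)
            exact (abs_add_le _ _).trans (by rw [abs_neg])
        _ ≤ P * P * |E i j| + (del * P + Q * del) * |WE i j| := by
            have := add_le_add (add_le_add t1 t2) t3
            linarith [this]
    calc ∑ j, |(A - AE) i j|
        ≤ ∑ j, (P * P * |E i j| + (del * P + Q * del) * |WE i j|) :=
          Finset.sum_le_sum fun j _ => ptwise j
      _ = P * P * (∑ j, |E i j|) + (del * P + Q * del) * (∑ j, |WE i j|) := by
          rw [Finset.sum_add_distrib, ← Finset.mul_sum, ← Finset.mul_sum]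
      _ ≤ C := by
          rw [hCdef]
          apply add_le_add
          · exact mul_le_mul_of_nonneg_left (hEle i) (by positivity)
          · exact mul_le_mul_of_nonneg_left hWEsum
              (add_nonneg (mul_nonneg hdelnn hPnn) (mul_nonneg hQnn hdelnn))
  -- C equals the RHS
  have hE' : normE = sa * sa - sb * sb := by rw [hsb2, hsa2]; ring
  have hstep1 : C = normE * (normW + dmin) / (dmin * (dmin - normE)) := by
    rw [hCdef, hPdef, hQdef, hdeldef, ← hsb2, ← hsa2, hE']
    have hab : sa + sb ≠ 0 := by positivity
    field_simp
    ring
  have hstep2 : eps * (1 + eta) / (eta * (eta - eps)) =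
      normE * (normW + dmin) / (dmin * (dmin - normE)) := by
    rw [heps, heta, div_sub_div_same]
    field_simp
  rw [hstep2]
  exact ciSup_le fun i => (hrow i).trans hstep1.le
end
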